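/- Let R ⊆ {1,…,n}³ be a set of non-attacking rooks. Suppose there exists a set D ⊆ {1,…,n}³ of cells (dots), disjoint from R, such that: no file of the cube contains both a rook and a dot; every rook-free file contains at least one dot; and for every connected component C of the graph on D (two dots adjacent exactly when they share a file) there is an integer k > 1 such that every file of the cube meeting C contains exactly k dots. Then R satisfies the capacity condition. -/

import Mathlib

/-- A cell of the n×n×n cube. -/
abbrev Cell (n : ℕ) := Fin n × Fin n × Fin n

/-- The file (axis-parallel line) of the cube in direction `d`, obtained by fixing the
other two coordinates to `u` and `v`.  Direction 0 varies the first coordinate,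
direction 1 the second, direction 2 the third. -/
def fileCells (n : ℕ) (d : Fin 3) (u v : Fin n) : Set (Cell n) :=
  if d = 0 then {x | x.2.1 = u ∧ x.2.2 = v}
  else if d = 1 then {x | x.1 = u ∧ x.2.2 = v}
  else {x | x.1 = u ∧ x.2.1 = v}

/-- Two cells share a file (equivalently: they agree in at least two coordinates). -/
def SameFile (n : ℕ) (a b : Cell n) : Prop :=
  ∃ (d : Fin 3) (u v : Fin n), a ∈ fileCells n d u v ∧ b ∈ fileCells n d u v
/-- A set of non-attacking rooks: any two of its cells sharing a file are equal,
i.e. any two distinct rooks agree in at most one coordinate. -/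
def NonAttacking (n : ℕ) (R : Set (Cell n)) : Prop :=
  ∀ a ∈ R, ∀ b ∈ R, SameFile n a b → a = b
/-- The graph on a set `D` of dots: two dots are adjacent iff they are distinct and
share a file. -/
def dotGraph (n : ℕ) (D : Set (Cell n)) : SimpleGraph D :=
  SimpleGraph.fromRel (fun a b => SameFile n a.1 b.1)
/-- The capacity condition: for all X, Y, Z ⊆ {1,…,n} the number of rooks of `R` in
X×Y×Z is at most cap(n,|X|,|Y|,|Z|) = |X||Y| − (n−|Z|)(|X|+|Y|−n). -/
def CapacityCondition (n : ℕ) (R : Set (Cell n)) : Prop :=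
  ∀ X Y Z : Finset (Fin n),
    (({x ∈ R | x.1 ∈ X ∧ x.2.1 ∈ Y ∧ x.2.2 ∈ Z}).ncard : ℤ) ≤
      (X.card : ℤ) * (Y.card : ℤ) -
        ((n : ℤ) - (Z.card : ℤ)) * ((X.card : ℤ) + (Y.card : ℤ) - (n : ℤ))

/-- If the rook-free part of the cube carries a dot set `D` (disjoint from
the rooks, no file containing both a rook and a dot, every rook-free file containing at
least one dot) such that every connected component of the dot graph is k-uniformly
distributed for some k > 1 (every file meeting the component contains exactly k dots),
then the rook set `R` satisfies the capacity condition. -/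
theorem capacity_of_uniformly_distributed (n : ℕ) (R D : Set (Cell n))
    (hR : NonAttacking n R) (hdisj : Disjoint R D)
    (hsep : ∀ (d : Fin 3) (u v : Fin n),
      ¬((R ∩ fileCells n d u v).Nonempty ∧ (D ∩ fileCells n d u v).Nonempty))
    (hcover : ∀ (d : Fin 3) (u v : Fin n),
      R ∩ fileCells n d u v = ∅ → (D ∩ fileCells n d u v).Nonempty)
    (hunif : ∀ C : (dotGraph n D).ConnectedComponent, ∃ k : ℕ, 1 < k ∧
      ∀ (d : Fin 3) (u v : Fin n),
        (∃ x : D, (dotGraph n D).connectedComponentMk x = C ∧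
          (x : Cell n) ∈ fileCells n d u v) →
        (D ∩ fileCells n d u v).ncard = k) :
    CapacityCondition n R := by
  classical
  intro X Y Z
  choose kf hkf1 hkf2 using hunif
  -- the weight function: a fractional Latin cube extending R
  obtain ⟨w, hwR, hwnn, hfile⟩ : ∃ w : Cell n → ℚ, (∀ x ∈ R, w x = 1) ∧ (∀ x, 0 ≤ w x) ∧
      ∀ (d : Fin 3) (u v : Fin n),
        ∑ x ∈ Finset.univ.filter (· ∈ fileCells n d u v), w x = 1 := by
    refine ⟨fun x => if x ∈ R then 1 else if h : x ∈ D then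
      ((kf ((dotGraph n D).connectedComponentMk ⟨x, h⟩) : ℚ))⁻¹ else 0, ?_, ?_, ?_⟩
    · intro x hx; simp [hx]
    · intro x
      by_cases hx : x ∈ R
      · simp [hx]
      · by_cases hxD : x ∈ D
        · simp only [hx, if_false, hxD, dif_pos]
          positivity
        · simp [hx, hxD]
    · intro d u v
      by_cases hex : (R ∩ fileCells n d u v).Nonempty
      · obtain ⟨a, haR, haf⟩ := hex
        have hnd : ∀ x ∈ fileCells n d u v, x ∉ D := by
          intro x hx hxD
          exact hsep d u v ⟨⟨a, haR, haf⟩, ⟨x, hxD, hx⟩⟩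
        rw [Finset.sum_eq_single a]
        · simp [haR]
        · intro b hb hba
          have hbf : b ∈ fileCells n d u v := (Finset.mem_filter.mp hb).2
          have hbR : b ∉ R := by
            intro hbR
            exact hba (hR b hbR a haR ⟨d, u, v, hbf, haf⟩)
          simp [hbR, hnd b hbf]
        · intro ha
          exact absurd (Finset.mem_filter.mpr ⟨Finset.mem_univ a, haf⟩) ha
      · have hRf : R ∩ fileCells n d u v = ∅ := Set.not_nonempty_iff_eq_empty.mp hex
        obtain ⟨x0, hx0D, hx0f⟩ := hcover d u v hRf
        set C := (dotGraph n D).connectedComponentMk ⟨x0, hx0D⟩ with hC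
        have hnR : ∀ x ∈ fileCells n d u v, x ∉ R := by
          intro x hx hxR
          have : x ∈ R ∩ fileCells n d u v := ⟨hxR, hx⟩
          rw [hRf] at this; exact this
        have hcomp : ∀ (x : Cell n) (hx : x ∈ D), x ∈ fileCells n d u v →
            (dotGraph n D).connectedComponentMk ⟨x, hx⟩ = C := by
          intro x hx hxf
          by_cases hxx : x = x0
          · subst hxx; rfl
          · refine SimpleGraph.ConnectedComponent.sound ?_
            refine SimpleGraph.Adj.reachable ?_
            rw [dotGraph, SimpleGraph.fromRel_adj]
            exact ⟨by simp [Subtype.ext_iff, hxx], Or.inl ⟨d, u, v, hxf, hx0f⟩⟩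
        have hcard : (D ∩ fileCells n d u v).ncard = kf C :=
          hkf2 C d u v ⟨⟨x0, hx0D⟩, rfl, hx0f⟩
        have hDset : D ∩ fileCells n d u v =
            ↑((Finset.univ.filter (· ∈ fileCells n d u v)).filter (· ∈ D)) := by
          ext x
          simp [Set.mem_inter_iff, and_comm]
        have hcard' : ((Finset.univ.filter (· ∈ fileCells n d u v)).filter (· ∈ D)).card
            = kf C := by
          rw [← hcard, hDset, Set.ncard_coe_finset]
        rw [← Finset.sum_subset (Finset.filter_subset (· ∈ D)
            (Finset.univ.filter (· ∈ fileCells n d u v)))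
            (by
              intro x hxF hxD'
              have hxf : x ∈ fileCells n d u v := (Finset.mem_filter.mp hxF).2
              have hxD : x ∉ D := fun h => hxD' (Finset.mem_filter.mpr ⟨hxF, h⟩)
              simp [hnR x hxf, hxD])]
        have : ∀ x ∈ (Finset.univ.filter (· ∈ fileCells n d u v)).filter (· ∈ D),
            (if x ∈ R then (1:ℚ) else if h : x ∈ D then
              ((kf ((dotGraph n D).connectedComponentMk ⟨x, h⟩) : ℚ))⁻¹ else 0)
            = ((kf C : ℚ))⁻¹ := by
          intro x hx
          obtain ⟨hxF, hxD⟩ := Finset.mem_filter.mp hx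
          have hxf : x ∈ fileCells n d u v := (Finset.mem_filter.mp hxF).2
          rw [if_neg (hnR x hxf), dif_pos hxD, hcomp x hxD hxf]
        rw [Finset.sum_congr rfl this, Finset.sum_const, hcard', nsmul_eq_mul]
        rw [mul_inv_cancel₀]
        exact Nat.cast_ne_zero.mpr (by have := hkf1 C; omega)
  -- coordinate line sums
  have key : ∀ (d : Fin 3) (u v : Fin n) (e : Fin n → Cell n), Function.Injective e →
      (∀ x : Cell n, x ∈ fileCells n d u v ↔ ∃ k, e k = x) → ∑ k, w (e k) = 1 := by
    intro d u v e he hmem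
    rw [← hfile d u v]
    rw [show Finset.univ.filter (· ∈ fileCells n d u v) = Finset.image e Finset.univ by
      ext x; simp [hmem x]]
    rw [Finset.sum_image (fun a _ b _ h => he h)]
  have hline0 : ∀ u v : Fin n, ∑ i, w (i, u, v) = 1 := by
    intro u v
    refine key 0 u v (fun i => (i, u, v))
      (fun a b h => by simpa using congrArg Prod.fst h) ?_
    rintro ⟨a, b, c⟩
    simp only [fileCells, if_pos rfl, Set.mem_setOf_eq]
    constructor
    · rintro ⟨rfl, rfl⟩; exact ⟨a, rfl⟩
    · rintro ⟨k, hk⟩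
      simp only [Prod.mk.injEq] at hk
      exact ⟨hk.2.1.symm, hk.2.2.symm⟩
  have hline1 : ∀ u v : Fin n, ∑ j, w (u, j, v) = 1 := by
    intro u v
    refine key 1 u v (fun j => (u, j, v))
      (fun a b h => by simpa using congrArg (fun p => p.2.1) h) ?_
    rintro ⟨a, b, c⟩
    simp only [fileCells, if_neg (by decide : (1 : Fin 3) ≠ 0), if_pos rfl, Set.mem_setOf_eq]
    constructor
    · rintro ⟨rfl, rfl⟩; exact ⟨b, rfl⟩
    · rintro ⟨k, hk⟩
      simp only [Prod.mk.injEq] at hk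
      exact ⟨hk.1.symm, hk.2.2.symm⟩
  have hline2 : ∀ u v : Fin n, ∑ k, w (u, v, k) = 1 := by
    intro u v
    refine key 2 u v (fun k => (u, v, k))
      (fun a b h => by simpa using congrArg (fun p => p.2.2) h) ?_
    rintro ⟨a, b, c⟩
    simp only [fileCells, if_neg (by decide : (2 : Fin 3) ≠ 0),
      if_neg (by decide : (2 : Fin 3) ≠ 1), Set.mem_setOf_eq]
    constructor
    · rintro ⟨rfl, rfl⟩; exact ⟨c, rfl⟩
    · rintro ⟨k, hk⟩
      simp only [Prod.mk.injEq] at hk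
      exact ⟨hk.1.symm, hk.2.1.symm⟩
  -- rewrite the counted set as a Finset
  have hT : {x ∈ R | x.1 ∈ X ∧ x.2.1 ∈ Y ∧ x.2.2 ∈ Z} =
      ↑((X ×ˢ Y ×ˢ Z).filter (· ∈ R)) := by
    ext x
    simp only [Set.mem_setOf_eq, Finset.coe_filter, Finset.mem_product]
    tauto
  rw [hT, Set.ncard_coe_finset]
  set T := (X ×ˢ Y ×ˢ Z).filter (· ∈ R) with hTdef
  have hcast : ∀ S : Finset (Fin n), ((Finset.univ \ S).card : ℚ) = (n : ℚ) - S.card := by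
    intro S
    have hle : S.card ≤ n := by simpa using Finset.card_le_univ S
    rw [Finset.card_sdiff_of_subset (Finset.subset_univ S), Finset.card_univ, Fintype.card_fin,
      Nat.cast_sub hle]
  have h1 : (T.card : ℚ) ≤ ∑ x ∈ X ×ˢ Y ×ˢ Z, w x := by
    have he : ∑ x ∈ T, w x = T.card := by
      rw [Finset.sum_congr rfl (fun x hx => hwR x (Finset.mem_filter.mp hx).2)]
      simp
      rfl
    rw [← he]
    exact Finset.sum_le_sum_of_subset_of_nonneg (Finset.filter_subset _ _)
      (fun x _ _ => hwnn x)
  have h2 : ∑ x ∈ X ×ˢ Y ×ˢ Z, w x = ∑ i ∈ X, ∑ j ∈ Y, ∑ k ∈ Z, w (i, j, k) := by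
    rw [Finset.sum_product]
    exact Finset.sum_congr rfl fun i _ => Finset.sum_product ..
  have hsplitZ : ∀ i j : Fin n, ∑ k ∈ Z, w (i, j, k)
      = 1 - ∑ k ∈ Finset.univ \ Z, w (i, j, k) := by
    intro i j
    have h := Finset.sum_sdiff_eq_sub (Finset.subset_univ Z) (f := fun k => w (i, j, k))
    rw [hline2 i j] at h
    linarith
  have h3 : ∑ i ∈ X, ∑ j ∈ Y, ∑ k ∈ Z, w (i, j, k)
      = (X.card : ℚ) * Y.card - ∑ k ∈ Finset.univ \ Z, ∑ i ∈ X, ∑ j ∈ Y, w (i, j, k) := by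
    calc ∑ i ∈ X, ∑ j ∈ Y, ∑ k ∈ Z, w (i, j, k)
        = ∑ i ∈ X, ∑ j ∈ Y, (1 - ∑ k ∈ Finset.univ \ Z, w (i, j, k)) :=
          Finset.sum_congr rfl fun i _ => Finset.sum_congr rfl fun j _ => hsplitZ i j
      _ = ∑ i ∈ X, ((Y.card : ℚ) - ∑ j ∈ Y, ∑ k ∈ Finset.univ \ Z, w (i, j, k)) := by
          refine Finset.sum_congr rfl fun i _ => ?_
          rw [Finset.sum_sub_distrib, Finset.sum_const, nsmul_eq_mul, mul_one]
      _ = (X.card : ℚ) * Y.card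
          - ∑ i ∈ X, ∑ j ∈ Y, ∑ k ∈ Finset.univ \ Z, w (i, j, k) := by
          rw [Finset.sum_sub_distrib, Finset.sum_const, nsmul_eq_mul]
      _ = (X.card : ℚ) * Y.card
          - ∑ k ∈ Finset.univ \ Z, ∑ i ∈ X, ∑ j ∈ Y, w (i, j, k) := by
          congr 1
          calc ∑ i ∈ X, ∑ j ∈ Y, ∑ k ∈ Finset.univ \ Z, w (i, j, k)
              = ∑ i ∈ X, ∑ k ∈ Finset.univ \ Z, ∑ j ∈ Y, w (i, j, k) :=
                Finset.sum_congr rfl fun i _ => Finset.sum_comm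
            _ = ∑ k ∈ Finset.univ \ Z, ∑ i ∈ X, ∑ j ∈ Y, w (i, j, k) := Finset.sum_comm
  have hlayer : ∀ k : Fin n, (X.card : ℚ) + Y.card - n ≤ ∑ i ∈ X, ∑ j ∈ Y, w (i, j, k) := by
    intro k
    have hsplitY : ∀ i : Fin n, ∑ j ∈ Y, w (i, j, k)
        = 1 - ∑ j ∈ Finset.univ \ Y, w (i, j, k) := by
      intro i
      have h := Finset.sum_sdiff_eq_sub (Finset.subset_univ Y) (f := fun j => w (i, j, k))
      rw [hline1 i k] at h
      linarith
    rw [Finset.sum_congr rfl fun i _ => hsplitY i, Finset.sum_sub_distrib, Finset.sum_const,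
      nsmul_eq_mul, mul_one]
    have hmono : ∑ i ∈ X, ∑ j ∈ Finset.univ \ Y, w (i, j, k)
        ≤ ∑ i ∈ Finset.univ, ∑ j ∈ Finset.univ \ Y, w (i, j, k) :=
      Finset.sum_le_sum_of_subset_of_nonneg (Finset.subset_univ X)
        (fun i _ _ => Finset.sum_nonneg fun j _ => hwnn _)
    have hswap : ∑ i ∈ Finset.univ, ∑ j ∈ Finset.univ \ Y, w (i, j, k)
        = ∑ j ∈ Finset.univ \ Y, ∑ i ∈ Finset.univ, w (i, j, k) := Finset.sum_comm
    have hcols : ∑ j ∈ Finset.univ \ Y, ∑ i : Fin n, w (i, j, k)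
        = ((Finset.univ \ Y).card : ℚ) := by
      rw [Finset.sum_congr rfl fun j _ => hline0 j k, Finset.sum_const, nsmul_eq_mul, mul_one]
    rw [hswap, hcols, hcast Y] at hmono
    linarith
  have h4 : ((Finset.univ \ Z).card : ℚ) * ((X.card : ℚ) + Y.card - n)
      ≤ ∑ k ∈ Finset.univ \ Z, ∑ i ∈ X, ∑ j ∈ Y, w (i, j, k) := by
    have h := Finset.card_nsmul_le_sum (Finset.univ \ Z)
      (fun k => ∑ i ∈ X, ∑ j ∈ Y, w (i, j, k)) ((X.card : ℚ) + Y.card - n)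
      (fun k _ => hlayer k)
    rwa [nsmul_eq_mul] at h
  have hQ : (T.card : ℚ) ≤ (X.card : ℚ) * Y.card
      - ((n : ℚ) - Z.card) * ((X.card : ℚ) + Y.card - n) := by
    have hc := hcast Z
    calc (T.card : ℚ) ≤ ∑ x ∈ X ×ˢ Y ×ˢ Z, w x := h1
      _ = ∑ i ∈ X, ∑ j ∈ Y, ∑ k ∈ Z, w (i, j, k) := h2
      _ = (X.card : ℚ) * Y.card
          - ∑ k ∈ Finset.univ \ Z, ∑ i ∈ X, ∑ j ∈ Y, w (i, j, k) := h3
      _ ≤ _ := by rw [← hc]; linarith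
  exact_mod_cast hQ
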